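/- Let a < b, let φ : [a,b] → [a,b] be an affine continuous map with φ(a) < φ(b), let g : [a,b] → [0,∞) be a φ-P-function (φ_h-convex with h(t) = 1) that is Lebesgue integrable, and let f : [a,b] → [0,∞) be Lebesgue integrable and (g,φ_h)-convex dominated on [a,b] with h(t) = 1. Then |(1/(φ(b) − φ(a))) ∫_{φ(a)}^{φ(b)} f(x) dx − (1/2) f((φ(a) + φ(b))/2)| ≤ (1/(φ(b) − φ(a))) ∫_{φ(a)}^{φ(b)} g(x) dx − (1/2) g((φ(a) + φ(b))/2). -/

import Mathlib

open MeasureTheory Set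

/-- `F` is `φ_h`-convex on `I`. -/
def PhiHConvexOn (I : Set ℝ) (h φ F : ℝ → ℝ) : Prop :=
  ∀ x ∈ I, ∀ y ∈ I, ∀ t ∈ Set.Ioo (0:ℝ) 1,
    F (t * φ x + (1 - t) * φ y) ≤ h t * F (φ x) + h (1 - t) * F (φ y)

/-- `f` is `(g, φ_h)`-convex dominated on `I`. -/
def GPhiHConvexDominated (I : Set ℝ) (h φ g f : ℝ → ℝ) : Prop :=
  ∀ x ∈ I, ∀ y ∈ I, ∀ t ∈ Set.Ioo (0:ℝ) 1,
    |h t * f (φ x) + h (1 - t) * f (φ y) - f (t * φ x + (1 - t) * φ y)| ≤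
      h t * g (φ x) + h (1 - t) * g (φ y) - g (t * φ x + (1 - t) * φ y)

private lemma comp_affine_intInt (f : ℝ → ℝ) {c : ℝ} (hc : c ≠ 0) (d p q : ℝ)
    (hf : IntervalIntegrable f volume (c * p + d) (c * q + d)) :
    IntervalIntegrable (fun t => f (c * t + d)) volume p q := by
  have h1 := hf.comp_add_right d
  simp only [add_sub_cancel_right] at h1
  have h2 := h1.comp_mul_left (c := c)
  have hp : c * p / c = p := by field_simp
  have hq : c * q / c = q := by field_simp
  rwa [hp, hq] at h2

theorem stmt9 (a b : ℝ) (hab : a < b) (φ f g : ℝ → ℝ)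
    (hφmaps : Set.MapsTo φ (Set.Icc a b) (Set.Icc a b))
    (hφaff : ∀ x ∈ Set.Icc a b, ∀ y ∈ Set.Icc a b, ∀ l ∈ Set.Icc (0:ℝ) 1,
      φ (l * x + (1 - l) * y) = l * φ x + (1 - l) * φ y)
    (hφcont : ContinuousOn φ (Set.Icc a b))
    (hφab : φ a < φ b)
    (hg0 : ∀ x ∈ Set.Icc a b, 0 ≤ g x)
    (hgconv : PhiHConvexOn (Set.Icc a b) (fun _ => 1) φ g)
    (hgint : IntegrableOn g (Set.Icc a b))
    (hf0 : ∀ x ∈ Set.Icc a b, 0 ≤ f x)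
    (hfint : IntegrableOn f (Set.Icc a b))
    (hfdom : GPhiHConvexDominated (Set.Icc a b) (fun _ => 1) φ g f) :
    |(1 / (φ b - φ a)) * ∫ x in φ a..φ b, f x - (1 / 2) * f ((φ a + φ b) / 2)| ≤
      (1 / (φ b - φ a)) * ∫ x in φ a..φ b, g x - (1 / 2) * g ((φ a + φ b) / 2) := by
  have hmemab : a ∈ Set.Icc a b := ⟨le_refl a, hab.le⟩
  have hmemb : b ∈ Set.Icc a b := ⟨hab.le, le_refl b⟩
  have hφa := hφmaps hmemab
  have hφb := hφmaps hmemb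
  have hsub : Set.Icc (φ a) (φ b) ⊆ Set.Icc a b := Set.Icc_subset_Icc hφa.1 hφb.2
  have hc : φ b - φ a ≠ 0 := sub_ne_zero.2 hφab.ne'
  set m : ℝ := (φ a + φ b) / 2 with hm
  -- interval integrability on [φ a, φ b]
  have hfI : IntervalIntegrable f volume (φ a) (φ b) := by
    rw [intervalIntegrable_iff_integrableOn_Icc_of_le hφab.le]
    exact hfint.mono_set hsub
  have hgI : IntervalIntegrable g volume (φ a) (φ b) := by
    rw [intervalIntegrable_iff_integrableOn_Icc_of_le hφab.le]
    exact hgint.mono_set hsub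
  -- the two affine parametrizations
  set u : ℝ → ℝ := fun t => (φ a - φ b) * t + φ b with hu
  set v : ℝ → ℝ := fun t => (φ b - φ a) * t + φ a with hv
  have hc1 : (φ a - φ b : ℝ) ≠ 0 := sub_ne_zero.2 hφab.ne
  have hfu : IntervalIntegrable (fun t => f (u t)) volume 0 1 := by
    apply comp_affine_intInt f hc1
    simpa using hfI.symm
  have hfv : IntervalIntegrable (fun t => f (v t)) volume 0 1 := by
    apply comp_affine_intInt f hc
    simpa using hfI
  have hgu : IntervalIntegrable (fun t => g (u t)) volume 0 1 := by
    apply comp_affine_intInt g hc1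
    simpa using hgI.symm
  have hgv : IntervalIntegrable (fun t => g (v t)) volume 0 1 := by
    apply comp_affine_intInt g hc
    simpa using hgI
  -- values of the parametrized integrals
  have hintfu : (∫ t in (0:ℝ)..1, f (u t)) = (φ b - φ a)⁻¹ * ∫ x in φ a..φ b, f x := by
    rw [hu]
    rw [intervalIntegral.integral_comp_mul_add f hc1 (φ b)]
    simp only [mul_zero, zero_add, mul_one]
    rw [intervalIntegral.integral_symm]
    have : (φ a - φ b)⁻¹ = -(φ b - φ a)⁻¹ := by
      rw [← neg_sub (φ b) (φ a), inv_neg]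
    rw [this]
    ring_nf
  have hintfv : (∫ t in (0:ℝ)..1, f (v t)) = (φ b - φ a)⁻¹ * ∫ x in φ a..φ b, f x := by
    rw [hv, intervalIntegral.integral_comp_mul_add f hc (φ a)]
    simp only [mul_zero, zero_add, mul_one, smul_eq_mul]
    ring_nf
  have hintgu : (∫ t in (0:ℝ)..1, g (u t)) = (φ b - φ a)⁻¹ * ∫ x in φ a..φ b, g x := by
    rw [hu]
    rw [intervalIntegral.integral_comp_mul_add g hc1 (φ b)]
    simp only [mul_zero, zero_add, mul_one]
    rw [intervalIntegral.integral_symm]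
    have : (φ a - φ b)⁻¹ = -(φ b - φ a)⁻¹ := by
      rw [← neg_sub (φ b) (φ a), inv_neg]
    rw [this]
    ring_nf
  have hintgv : (∫ t in (0:ℝ)..1, g (v t)) = (φ b - φ a)⁻¹ * ∫ x in φ a..φ b, g x := by
    rw [hv, intervalIntegral.integral_comp_mul_add g hc (φ a)]
    simp only [mul_zero, zero_add, mul_one, smul_eq_mul]
    ring_nf
  -- pointwise inequality on (0,1)
  have key : ∀ t ∈ Set.Ioo (0:ℝ) 1,
      |f (u t) + f (v t) - f m| ≤ g (u t) + g (v t) - g m := by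
    intro t ht
    obtain ⟨ht0, ht1⟩ := ht
    have ht01 : t ∈ Set.Icc (0:ℝ) 1 := ⟨ht0.le, ht1.le⟩
    set xt : ℝ := t * a + (1 - t) * b with hxt
    set yt : ℝ := t * b + (1 - t) * a with hyt
    have hxtm : xt ∈ Set.Icc a b := by
      constructor <;> nlinarith [ht0.le, ht1.le]
    have hytm : yt ∈ Set.Icc a b := by
      constructor <;> nlinarith [ht0.le, ht1.le]
    have hφxt : φ xt = t * φ a + (1 - t) * φ b := hφaff a hmemab b hmemb t ht01
    have hφyt : φ yt = t * φ b + (1 - t) * φ a := hφaff b hmemb a hmemab t ht01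
    have hdom := hfdom xt hxtm yt hytm (1/2) (by norm_num)
    simp only [one_mul] at hdom
    have e1 : φ xt = u t := by rw [hφxt, hu]; ring
    have e2 : φ yt = v t := by rw [hφyt, hv]; ring
    have e3 : (1:ℝ)/2 * φ xt + (1 - 1/2) * φ yt = m := by
      rw [hφxt, hφyt, hm]; ring
    rw [e3, e1, e2] at hdom
    exact hdom
  -- integrate the pointwise inequality
  have hFint : IntervalIntegrable (fun t => f (u t) + f (v t) - f m) volume 0 1 :=
    (hfu.add hfv).sub (intervalIntegrable_const)
  have hGint : IntervalIntegrable (fun t => g (u t) + g (v t) - g m) volume 0 1 :=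
    (hgu.add hgv).sub (intervalIntegrable_const)
  have hae : ∀ᵐ t ∂(volume.restrict (Set.Icc (0:ℝ) 1)),
      |f (u t) + f (v t) - f m| ≤ g (u t) + g (v t) - g m := by
    have hIoo : ∀ᵐ t ∂(volume.restrict (Set.Icc (0:ℝ) 1)), t ∈ Set.Ioo (0:ℝ) 1 := by
      rw [← Measure.restrict_congr_set Ioo_ae_eq_Icc]
      exact ae_restrict_mem measurableSet_Ioo
    filter_upwards [hIoo] with t ht using key t ht
  have hstep1 : |∫ t in (0:ℝ)..1, (f (u t) + f (v t) - f m)| ≤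
      ∫ t in (0:ℝ)..1, |f (u t) + f (v t) - f m| :=
    intervalIntegral.abs_integral_le_integral_abs zero_le_one
  have hstep2 : (∫ t in (0:ℝ)..1, |f (u t) + f (v t) - f m|) ≤
      ∫ t in (0:ℝ)..1, (g (u t) + g (v t) - g m) :=
    intervalIntegral.integral_mono_ae_restrict zero_le_one hFint.abs hGint hae
  have hcomp1 : (∫ t in (0:ℝ)..1, (f (u t) + f (v t) - f m)) =
      2 * ((φ b - φ a)⁻¹ * ∫ x in φ a..φ b, f x) - f m := by
    rw [intervalIntegral.integral_sub (hfu.add hfv) intervalIntegrable_const,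
      intervalIntegral.integral_add hfu hfv, hintfu, hintfv]
    simp
    ring
  have hcomp2 : (∫ t in (0:ℝ)..1, (g (u t) + g (v t) - g m)) =
      2 * ((φ b - φ a)⁻¹ * ∫ x in φ a..φ b, g x) - g m := by
    rw [intervalIntegral.integral_sub (hgu.add hgv) intervalIntegrable_const,
      intervalIntegral.integral_add hgu hgv, hintgu, hintgv]
    simp
    ring
  have hfinal : |2 * ((φ b - φ a)⁻¹ * ∫ x in φ a..φ b, f x) - f m| ≤
      2 * ((φ b - φ a)⁻¹ * ∫ x in φ a..φ b, g x) - g m := by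
    rw [← hcomp1, ← hcomp2]
    exact hstep1.trans hstep2
  have hsplitf : (∫ x in φ a..φ b, (f x - 1 / 2 * f m)) =
      (∫ x in φ a..φ b, f x) - (φ b - φ a) * (1 / 2 * f m) := by
    rw [intervalIntegral.integral_sub hfI intervalIntegrable_const,
      intervalIntegral.integral_const, smul_eq_mul]
  have hsplitg : (∫ x in φ a..φ b, (g x - 1 / 2 * g m)) =
      (∫ x in φ a..φ b, g x) - (φ b - φ a) * (1 / 2 * g m) := by
    rw [intervalIntegral.integral_sub hgI intervalIntegrable_const,
      intervalIntegral.integral_const, smul_eq_mul]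
  rw [hsplitf, hsplitg]
  have e1 : 1 / (φ b - φ a) * ((∫ x in φ a..φ b, f x) - (φ b - φ a) * (1 / 2 * f m)) =
      1 / 2 * (2 * ((φ b - φ a)⁻¹ * ∫ x in φ a..φ b, f x) - f m) := by
    field_simp
  have e2 : 1 / (φ b - φ a) * ((∫ x in φ a..φ b, g x) - (φ b - φ a) * (1 / 2 * g m)) =
      1 / 2 * (2 * ((φ b - φ a)⁻¹ * ∫ x in φ a..φ b, g x) - g m) := by
    field_simp
  rw [e1, e2, abs_mul, abs_of_nonneg (by norm_num : (0:ℝ) ≤ 1/2)]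
  have h2 : (0:ℝ) < 1/2 := by norm_num
  exact mul_le_mul_of_nonneg_left hfinal h2.le
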